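/- Let G = (V, E) be a graph whose vertex set is partitioned into sets X_1, …, X_k (good clusters) and B (bad points), satisfying: (1) for all u, v in the same X_i, (u,v) ∈ E; (2) for u ∈ X_i and v ∈ X_j with i ≠ j, (u,v) ∉ E and u and v have no common neighbor in G. Then the iterative greedy procedure that k times selects the vertex of maximum remaining degree and removes its closed neighborhood produces clusters C(v_1), …, C(v_k) for which there exists a bijection σ: [k] → [k] with ∑_i |X_{σ(i)} ∖ C(v_i)| ≤ 3|B|. -/

import Mathlib

open Finset

/-- Iterative greedy clustering guarantee: if `G`'s vertices are partitioned into
cliques `X_1,…,X_k` (good clusters) and bad points `B`, with distinct good clusters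
non-adjacent and sharing no common neighbor, then any run of the greedy procedure
(repeatedly pick a vertex of maximum remaining closed-neighborhood size and remove
its closed neighborhood) produces clusters `C 0, …, C (k-1)` such that for some
bijection `σ`, `∑ i |X (σ i) \ C i| ≤ 3|B|`. -/
theorem greedy_clustering_error_bound {V : Type*} [Fintype V] [DecidableEq V]
    (G : SimpleGraph V) [DecidableRel G.Adj] (k : ℕ)
    (X : Fin k → Finset V) (B : Finset V)
    (hdisj : ∀ i j, i ≠ j → Disjoint (X i) (X j))
    (hdisjB : ∀ i, Disjoint (X i) B)
    (hcover : ∀ v : V, v ∈ B ∨ ∃ i, v ∈ X i)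
    (hclique : ∀ i, ∀ u ∈ X i, ∀ v ∈ X i, u ≠ v → G.Adj u v)
    (hfar : ∀ i j, i ≠ j → ∀ u ∈ X i, ∀ v ∈ X j,
      ¬ G.Adj u v ∧ ∀ w, ¬ (G.Adj u w ∧ G.Adj v w))
    (R : ℕ → Finset V) (v : ℕ → V) (C : ℕ → Finset V)
    (hR0 : R 0 = Finset.univ)
    (hv : ∀ i < k, v i ∈ R i)
    (hC : ∀ i < k, C i = (insert (v i) (G.neighborFinset (v i))) ∩ R i)
    (hmax : ∀ i < k, ∀ u ∈ R i, ((insert u (G.neighborFinset u)) ∩ R i).card ≤ (C i).card)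
    (hRstep : ∀ i < k, R (i + 1) = R i \ C i) :
    ∃ σ : Equiv.Perm (Fin k),
      ∑ i : Fin k, (X (σ i) \ C (i : ℕ)).card ≤ 3 * B.card := by
  classical
  -- C i ⊆ R i
  have hCR : ∀ i, i < k → C i ⊆ R i := by
    intro i hi
    rw [hC i hi]
    exact inter_subset_right
  -- R antitone
  have hRanti : ∀ a m, a ≤ m → m ≤ k → R m ⊆ R a := by
    intro a m
    induction m with
    | zero => intro ha _; have : a = 0 := Nat.le_zero.mp ha; subst this; exact subset_rfl
    | succ n ih =>
      intro ha hk
      rcases Nat.lt_or_ge a (n+1) with h | h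
      · have h1 : R (n+1) ⊆ R n := by
          rw [hRstep n (by omega)]; exact sdiff_subset
        exact h1.trans (ih (by omega) (by omega))
      · have : a = n + 1 := by omega
        subst this; exact subset_rfl
  -- untouched before m ⇒ X j ⊆ R m
  have hXsubR : ∀ (j : Fin k) (m : ℕ), m ≤ k → (∀ i', i' < m → C i' ∩ X j = ∅) → X j ⊆ R m := by
    intro j m
    induction m with
    | zero => intro _ _; rw [hR0]; exact subset_univ _
    | succ n ih =>
      intro hk hemp
      rw [hRstep n (by omega)]
      refine subset_sdiff.mpr ⟨ih (by omega) (fun i' h => hemp i' (by omega)), ?_⟩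
      exact (disjoint_iff_inter_eq_empty.mpr (hemp n (Nat.lt_succ_self n))).symm
  -- C's pairwise disjoint
  have hCd : ∀ i₁ i₂, i₁ < i₂ → i₂ < k → Disjoint (C i₁) (C i₂) := by
    intro i₁ i₂ h hk
    have h1 : C i₂ ⊆ R i₂ := hCR _ hk
    have h2 : R i₂ ⊆ R (i₁ + 1) := hRanti _ _ (by omega) (by omega)
    rw [hRstep i₁ (by omega)] at h2
    exact Finset.disjoint_right.mpr fun x hx =>
      (Finset.mem_sdiff.mp (h2 (h1 hx))).2
  -- sum of |C m ∩ B| ≤ |B|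
  have hBsum : ∑ m ∈ Finset.range k, (C m ∩ B).card ≤ B.card := by
    have hdis : ((Finset.range k : Finset ℕ) : Set ℕ).PairwiseDisjoint (fun m => C m ∩ B) := by
      intro a ha b hb hab
      simp only [Finset.coe_range, Set.mem_Iio] at ha hb
      rcases Nat.lt_or_ge a b with h | h
      · exact (hCd a b h hb).mono inter_subset_left inter_subset_left
      · have : b < a := by omega
        exact ((hCd b a this ha).mono inter_subset_left inter_subset_left).symm
    rw [← Finset.card_biUnion (fun a ha b hb hab => hdis ha hb hab)]
    exact card_le_card (by
      intro x hx
      rcases Finset.mem_biUnion.mp hx with ⟨m, _, hm⟩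
      exact (Finset.mem_inter.mp hm).2)
  -- uniqueness: C m meets at most one cluster
  have h5 : ∀ m, m < k → ∀ a b : Fin k, a ≠ b → (C m ∩ X a).Nonempty →
      (C m ∩ X b).Nonempty → False := by
    intro m hm a b hab hxne hyne
    obtain ⟨x, hx⟩ := hxne
    obtain ⟨y, hy⟩ := hyne
    have hxC : x ∈ insert (v m) (G.neighborFinset (v m)) := by
      have := (Finset.mem_inter.mp hx).1
      rw [hC m hm] at this
      exact (Finset.mem_inter.mp this).1
    have hyC : y ∈ insert (v m) (G.neighborFinset (v m)) := by
      have := (Finset.mem_inter.mp hy).1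
      rw [hC m hm] at this
      exact (Finset.mem_inter.mp this).1
    have hxa : x ∈ X a := (Finset.mem_inter.mp hx).2
    have hyb : y ∈ X b := (Finset.mem_inter.mp hy).2
    rcases Finset.mem_insert.mp hxC with hx1 | hx1 <;>
      rcases Finset.mem_insert.mp hyC with hy1 | hy1
    · subst hx1; subst hy1
      exact (Finset.disjoint_left.mp (hdisj a b hab) hxa) hyb
    · exact (hfar a b hab x hxa y hyb).1
        (by rw [hx1]; exact (SimpleGraph.mem_neighborFinset _ _ _).mp hy1)
    · exact (hfar b a hab.symm y hyb x hxa).1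
        (by rw [hy1]; exact (SimpleGraph.mem_neighborFinset _ _ _).mp hx1)
    · exact (hfar a b hab x hxa y hyb).2 (v m)
        ⟨((SimpleGraph.mem_neighborFinset _ _ _).mp hx1).symm,
         ((SimpleGraph.mem_neighborFinset _ _ _).mp hy1).symm⟩
  -- maximality key 1
  have hKEY1 : ∀ m, m < k → ∀ j : Fin k, (X j ∩ R m).card ≤ (C m).card := by
    intro m hm j
    rcases (X j ∩ R m).eq_empty_or_nonempty with he | ⟨u, hu⟩
    · simp [he]
    · have hu1 : u ∈ X j := (Finset.mem_inter.mp hu).1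
      have hu2 : u ∈ R m := (Finset.mem_inter.mp hu).2
      have hsub : X j ∩ R m ⊆ insert u (G.neighborFinset u) ∩ R m := by
        intro x hx
        have hx1 : x ∈ X j := (Finset.mem_inter.mp hx).1
        have hx2 : x ∈ R m := (Finset.mem_inter.mp hx).2
        refine Finset.mem_inter.mpr ⟨?_, hx2⟩
        by_cases hxu : x = u
        · subst hxu; exact Finset.mem_insert_self _ _
        · exact Finset.mem_insert_of_mem
            ((SimpleGraph.mem_neighborFinset _ _ _).mpr
              (hclique j u hu1 x hx1 (fun h => hxu h.symm)))
      exact (card_le_card hsub).trans (hmax m hm u hu2)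
  -- key 2
  have hKEY2 : ∀ m, m < k → ∀ j : Fin k, (∀ j', j' ≠ j → C m ∩ X j' = ∅) →
      (C m).card ≤ (C m ∩ B).card + (C m ∩ X j).card := by
    intro m hm j hothers
    have hsub : C m ⊆ (C m ∩ B) ∪ (C m ∩ X j) := by
      intro x hx
      rcases hcover x with hB | ⟨j', hj'⟩
      · exact Finset.mem_union_left _ (Finset.mem_inter.mpr ⟨hx, hB⟩)
      · by_cases hjj : j' = j
        · subst hjj; exact Finset.mem_union_right _ (Finset.mem_inter.mpr ⟨hx, hj'⟩)
        · exact absurd (Finset.mem_inter.mpr ⟨hx, hj'⟩) (by rw [hothers j' hjj]; simp)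
    exact (card_le_card hsub).trans (card_union_le _ _)
  -- remnant bound
  have hRem : ∀ q, q < k → ∀ t : Fin k, (C q ∩ X t).Nonempty →
      (X t ∩ R (q+1)).card ≤ (C q ∩ B).card := by
    intro q hq t hne
    have hothers : ∀ j', j' ≠ t → C q ∩ X j' = ∅ := by
      intro j' hj'
      by_contra hcon
      exact h5 q hq j' t hj' (Finset.nonempty_iff_ne_empty.mpr hcon) hne
    have h1 : (X t ∩ R q).card ≤ (C q ∩ B).card + (C q ∩ X t).card :=
      (hKEY1 q hq t).trans (hKEY2 q hq t hothers)
    have hdis : Disjoint (X t ∩ R (q+1)) (C q ∩ X t) := by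
      rw [hRstep q hq]
      exact Finset.disjoint_left.mpr fun x hx hx2 =>
        (Finset.mem_sdiff.mp (Finset.mem_inter.mp hx).2).2 (Finset.mem_inter.mp hx2).1
    have hun : (X t ∩ R (q+1)) ∪ (C q ∩ X t) ⊆ X t ∩ R q := by
      intro x hx
      rcases Finset.mem_union.mp hx with h | h
      · rw [hRstep q hq] at h
        exact Finset.mem_inter.mpr ⟨(Finset.mem_inter.mp h).1,
          (Finset.mem_sdiff.mp (Finset.mem_inter.mp h).2).1⟩
      · exact Finset.mem_inter.mpr ⟨(Finset.mem_inter.mp h).2,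
          hCR q hq (Finset.mem_inter.mp h).1⟩
    have h2 := card_le_card hun
    rw [Finset.card_union_of_disjoint hdis] at h2
    omega
  -- first-touch time
  set FN : Fin k → ℕ := fun j => sInf {m | m < k ∧ (C m ∩ X j).Nonempty} with hFNdef
  set T : Finset (Fin k) := Finset.univ.filter (fun j => ∃ m, m < k ∧ (C m ∩ X j).Nonempty)
    with hTdef
  have hT_mem : ∀ j, j ∈ T ↔ ∃ m, m < k ∧ (C m ∩ X j).Nonempty := by
    intro j; simp [hTdef]
  have hF1 : ∀ j ∈ T, FN j < k ∧ (C (FN j) ∩ X j).Nonempty := by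
    intro j hj
    exact Nat.sInf_mem ((hT_mem j).mp hj)
  have hF2 : ∀ (j : Fin k) (m : ℕ), m < k → (C m ∩ X j).Nonempty → FN j ≤ m := by
    intro j m hm hne
    exact Nat.sInf_le ⟨hm, hne⟩
  have hF3 : ∀ (j : Fin k) (m : ℕ), m < FN j → m < k → C m ∩ X j = ∅ := by
    intro j m hm hk
    by_contra h
    have : FN j ≤ m := Nat.sInf_le ⟨hk, Finset.nonempty_iff_ne_empty.mpr h⟩
    omega
  set fstep : Fin k → Fin k := fun j => if h : FN j < k then ⟨FN j, h⟩ else j with hfstepdef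
  have hfstepT : ∀ j ∈ T, (fstep j : ℕ) = FN j := by
    intro j hj
    rw [hfstepdef]
    simp [dif_pos (hF1 j hj).1]
  have hfstep_inj : ∀ j₁ ∈ T, ∀ j₂ ∈ T, fstep j₁ = fstep j₂ → j₁ = j₂ := by
    intro j₁ h₁ j₂ h₂ he
    have hv1 : FN j₁ = FN j₂ := by
      rw [← hfstepT j₁ h₁, ← hfstepT j₂ h₂, he]
    by_contra hne
    exact h5 (FN j₁) (hF1 j₁ h₁).1 j₁ j₂ hne (hF1 j₁ h₁).2 (hv1 ▸ (hF1 j₂ h₂).2)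
  set Timg : Finset (Fin k) := T.image fstep with hTimgdef
  have hcards : (Tᶜ : Finset (Fin k)).card = (Timgᶜ : Finset (Fin k)).card := by
    rw [Finset.card_compl, Finset.card_compl, hTimgdef,
      Finset.card_image_of_injOn (fun a ha b hb => hfstep_inj a ha b hb)]
  set e := Finset.equivOfCardEq hcards with hedef
  set π : Fin k → Fin k :=
    fun j => if hj : j ∈ T then fstep j else (e ⟨j, Finset.mem_compl.mpr hj⟩ : Fin k) with hπdef
  have hπT : ∀ j ∈ T, π j = fstep j := by
    intro j hj; rw [hπdef]; simp only [dif_pos hj]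
  have hπC : ∀ j ∉ T, π j ∈ (Timgᶜ : Finset (Fin k)) := by
    intro j hj; rw [hπdef]; simp only [dif_neg hj]
    exact (e ⟨j, Finset.mem_compl.mpr hj⟩).2
  have hπinj : Function.Injective π := by
    intro j₁ j₂ he'
    by_cases h₁ : j₁ ∈ T <;> by_cases h₂ : j₂ ∈ T
    · exact hfstep_inj j₁ h₁ j₂ h₂ (by rwa [hπT j₁ h₁, hπT j₂ h₂] at he')
    · exfalso
      have hm : π j₁ ∈ Timg := by
        rw [hπT j₁ h₁, hTimgdef]; exact Finset.mem_image_of_mem fstep h₁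
      rw [he'] at hm
      exact Finset.mem_compl.mp (hπC j₂ h₂) hm
    · exfalso
      have hm : π j₂ ∈ Timg := by
        rw [hπT j₂ h₂, hTimgdef]; exact Finset.mem_image_of_mem fstep h₂
      rw [← he'] at hm
      exact Finset.mem_compl.mp (hπC j₁ h₁) hm
    · have : (⟨j₁, Finset.mem_compl.mpr h₁⟩ : {x // x ∈ (Tᶜ : Finset (Fin k))}) =
          ⟨j₂, Finset.mem_compl.mpr h₂⟩ := by
        apply e.injective
        apply Subtype.ext
        rw [hπdef] at he'
        simpa [dif_neg h₁, dif_neg h₂] using he'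
      exact congrArg Subtype.val this
  have hπbij : Function.Bijective π := (Finite.injective_iff_bijective).mp hπinj
  refine ⟨(Equiv.ofBijective π hπbij).symm, ?_⟩
  have htrans : ∑ i : Fin k, (X ((Equiv.ofBijective π hπbij).symm i) \ C (i : ℕ)).card
      = ∑ j : Fin k, (X j \ C (π j : ℕ)).card := by
    rw [← Equiv.sum_comp (Equiv.ofBijective π hπbij)
      (fun i : Fin k => (X ((Equiv.ofBijective π hπbij).symm i) \ C (i : ℕ)).card)]
    refine Finset.sum_congr rfl fun j _ => ?_
    rw [Equiv.symm_apply_apply]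
    rfl
  rw [htrans, ← Finset.sum_add_sum_compl T (fun j => (X j \ C (π j : ℕ)).card)]
  -- injectivity of FN on T
  have hFN_inj : ∀ j₁ ∈ T, ∀ j₂ ∈ T, FN j₁ = FN j₂ → j₁ = j₂ := by
    intro j₁ h₁ j₂ h₂ he'
    by_contra hne
    exact h5 (FN j₁) (hF1 j₁ h₁).1 j₁ j₂ hne (hF1 j₁ h₁).2 (he' ▸ (hF1 j₂ h₂).2)
  -- Part 1 : sum over T
  have hpart1 : ∑ j ∈ T, (X j \ C (π j : ℕ)).card ≤ B.card := by
    have hA : ∀ j ∈ T, (X j \ C (π j : ℕ)).card ≤ (C (FN j) ∩ B).card := by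
      intro j hj
      obtain ⟨hFk, hFne⟩ := hF1 j hj
      have hπv : (π j : ℕ) = FN j := by rw [hπT j hj]; exact hfstepT j hj
      rw [hπv]
      have hXR : X j ⊆ R (FN j) :=
        hXsubR j (FN j) (le_of_lt hFk) (fun i' hi' => hF3 j i' hi' (lt_trans hi' hFk))
      have h1 : X j ∩ R (FN j) = X j := inter_eq_left.mpr hXR
      have hothers : ∀ j', j' ≠ j → C (FN j) ∩ X j' = ∅ := by
        intro j' hj'
        by_contra hcon
        exact h5 (FN j) hFk j' j hj' (Finset.nonempty_iff_ne_empty.mpr hcon) hFne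
      have h2 := (hKEY1 (FN j) hFk j).trans (hKEY2 (FN j) hFk j hothers)
      rw [h1] at h2
      have h3 := Finset.card_sdiff_add_card_inter (X j) (C (FN j))
      have h4 : X j ∩ C (FN j) = C (FN j) ∩ X j := inter_comm _ _
      rw [h4] at h3
      omega
    calc ∑ j ∈ T, (X j \ C (π j : ℕ)).card
        ≤ ∑ j ∈ T, (C (FN j) ∩ B).card := Finset.sum_le_sum hA
      _ = ∑ m ∈ T.image FN, (C m ∩ B).card := by rw [Finset.sum_image hFN_inj]
      _ ≤ ∑ m ∈ Finset.range k, (C m ∩ B).card := by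
          refine Finset.sum_le_sum_of_subset ?_
          intro m hm
          obtain ⟨j, hj, rfl⟩ := Finset.mem_image.mp hm
          exact Finset.mem_range.mpr (hF1 j hj).1
      _ ≤ B.card := hBsum
  -- Part 2 : sum over Tᶜ
  set tc : Fin k → Fin k :=
    fun i => if h : ∃ t : Fin k, (C (i : ℕ) ∩ X t).Nonempty then h.choose else i with htcdef
  have htc : ∀ i : Fin k, (h : ∃ t : Fin k, (C (i : ℕ) ∩ X t).Nonempty) →
      (C (i : ℕ) ∩ X (tc i)).Nonempty := by
    intro i h
    rw [htcdef]; simp only [dif_pos h]; exact h.choose_spec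
  set qs : Fin k → ℕ :=
    fun i => Nat.findGreatest (fun m => (C m ∩ X (tc i)).Nonempty) ((i : ℕ) - 1) with hqsdef
  have hS : ∀ i : Fin k, i ∉ Timg → (∃ t : Fin k, (C (i : ℕ) ∩ X t).Nonempty) →
      (C (qs i) ∩ X (tc i)).Nonempty ∧ qs i < (i : ℕ) := by
    intro i hi h
    have hti := htc i h
    have htT : tc i ∈ T := (hT_mem (tc i)).mpr ⟨(i : ℕ), i.isLt, hti⟩
    have hFle : FN (tc i) ≤ (i : ℕ) := hF2 (tc i) (i : ℕ) i.isLt hti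
    have hFlt : FN (tc i) < (i : ℕ) := by
      rcases lt_or_eq_of_le hFle with h' | h'
      · exact h'
      · exfalso
        apply hi
        rw [hTimgdef]
        refine Finset.mem_image.mpr ⟨tc i, htT, ?_⟩
        apply Fin.ext
        rw [hfstepT (tc i) htT, h']
    have hPF : (C (FN (tc i)) ∩ X (tc i)).Nonempty := (hF1 (tc i) htT).2
    have hq : (C (qs i) ∩ X (tc i)).Nonempty := by
      simp only [hqsdef]
      exact Nat.findGreatest_spec (P := fun m => (C m ∩ X (tc i)).Nonempty)
        (show FN (tc i) ≤ (i : ℕ) - 1 by omega) hPF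
    have hqle : qs i ≤ (i : ℕ) - 1 := by
      simp only [hqsdef]
      exact Nat.findGreatest_le _
    exact ⟨hq, by omega⟩
  set w : Fin k → ℕ := fun i =>
    if ∃ t : Fin k, (C (i : ℕ) ∩ X t).Nonempty then (C (qs i) ∩ B).card else 0 with hwdef
  have hBB : ∀ i : Fin k, i ∉ Timg → ∀ j : Fin k, j ∉ T →
      (X j).card ≤ (C (i : ℕ) ∩ B).card + w i := by
    intro i hi j hj
    have hempty : ∀ m, m < k → C m ∩ X j = ∅ := by
      intro m hm
      by_contra hcon
      exact hj ((hT_mem j).mpr ⟨m, hm, Finset.nonempty_iff_ne_empty.mpr hcon⟩)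
    have hXR : X j ⊆ R (i : ℕ) :=
      hXsubR j (i : ℕ) (le_of_lt i.isLt) (fun i' h' => hempty i' (lt_trans h' i.isLt))
    have h1 : X j ∩ R (i : ℕ) = X j := inter_eq_left.mpr hXR
    have h2 := hKEY1 (i : ℕ) i.isLt j
    rw [h1] at h2
    by_cases h : ∃ t : Fin k, (C (i : ℕ) ∩ X t).Nonempty
    · obtain ⟨hq, hqlt⟩ := hS i hi h
      have hti := htc i h
      have hothers : ∀ j', j' ≠ tc i → C (i : ℕ) ∩ X j' = ∅ := by
        intro j' hj'
        by_contra hcon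
        exact h5 (i : ℕ) i.isLt j' (tc i) hj' (Finset.nonempty_iff_ne_empty.mpr hcon) hti
      have h3 := hKEY2 (i : ℕ) i.isLt (tc i) hothers
      have h4 : C (i : ℕ) ∩ X (tc i) ⊆ X (tc i) ∩ R (qs i + 1) := by
        intro x hx
        refine Finset.mem_inter.mpr ⟨(Finset.mem_inter.mp hx).2, ?_⟩
        exact hRanti (qs i + 1) (i : ℕ) (by omega) (le_of_lt i.isLt)
          (hCR (i : ℕ) i.isLt (Finset.mem_inter.mp hx).1)
      have h5' := hRem (qs i) (by have := i.isLt; omega) (tc i) hq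
      have h6 := card_le_card h4
      have hw : w i = (C (qs i) ∩ B).card := by rw [hwdef]; simp only [if_pos h]
      omega
    · have hothers : ∀ j', j' ≠ j → C (i : ℕ) ∩ X j' = ∅ := by
        push_neg at h
        intro j' _
        exact h j'
      have h3 := hKEY2 (i : ℕ) i.isLt j hothers
      have hempty2 : C (i : ℕ) ∩ X j = ∅ := hempty (i : ℕ) i.isLt
      have hw : w i = 0 := by rw [hwdef]; simp only [if_neg h]
      rw [hempty2] at h3
      simp only [Finset.card_empty] at h3
      omega
  have hB1 : ∑ i ∈ (Timgᶜ : Finset (Fin k)), (C (i : ℕ) ∩ B).card ≤ B.card := by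
    calc ∑ i ∈ (Timgᶜ : Finset (Fin k)), (C (i : ℕ) ∩ B).card
        ≤ ∑ i : Fin k, (C (i : ℕ) ∩ B).card :=
          Finset.sum_le_sum_of_subset (Finset.subset_univ _)
      _ = ∑ m ∈ Finset.range k, (C m ∩ B).card :=
          Fin.sum_univ_eq_sum_range (fun m => (C m ∩ B).card) k
      _ ≤ B.card := hBsum
  have hB2 : ∑ i ∈ (Timgᶜ : Finset (Fin k)), w i ≤ B.card := by
    set S : Finset (Fin k) :=
      (Timgᶜ : Finset (Fin k)).filter (fun i => ∃ t : Fin k, (C (i : ℕ) ∩ X t).Nonempty)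
      with hSdef
    have hsum_eq : ∑ i ∈ (Timgᶜ : Finset (Fin k)), w i = ∑ i ∈ S, (C (qs i) ∩ B).card := by
      rw [hSdef, Finset.sum_filter]
    have hqs_inj : ∀ i₁ ∈ S, ∀ i₂ ∈ S, qs i₁ = qs i₂ → i₁ = i₂ := by
      intro i₁ h₁ i₂ h₂ he'
      obtain ⟨hm₁, hp₁⟩ := Finset.mem_filter.mp h₁
      obtain ⟨hm₂, hp₂⟩ := Finset.mem_filter.mp h₂
      obtain ⟨hq₁, hlt₁⟩ := hS i₁ (Finset.mem_compl.mp hm₁) hp₁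
      obtain ⟨hq₂, hlt₂⟩ := hS i₂ (Finset.mem_compl.mp hm₂) hp₂
      have htceq : tc i₁ = tc i₂ := by
        by_contra hne
        exact h5 (qs i₁) (by have := i₁.isLt; omega) (tc i₁) (tc i₂) hne hq₁ (he' ▸ hq₂)
      rcases lt_trichotomy (i₁ : ℕ) (i₂ : ℕ) with h' | h' | h'
      · exfalso
        have hP : (C (i₁ : ℕ) ∩ X (tc i₂)).Nonempty := htceq ▸ htc i₁ hp₁
        have h0 : qs i₂ < (i₁ : ℕ) := by omega
        simp only [hqsdef] at h0
        exact Nat.findGreatest_is_greatest h0 (by omega) hP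
      · exact Fin.ext h'
      · exfalso
        have hP : (C (i₂ : ℕ) ∩ X (tc i₁)).Nonempty := htceq ▸ htc i₂ hp₂
        have h0 : qs i₁ < (i₂ : ℕ) := by omega
        simp only [hqsdef] at h0
        exact Nat.findGreatest_is_greatest h0 (by omega) hP
    calc ∑ i ∈ (Timgᶜ : Finset (Fin k)), w i
        = ∑ i ∈ S, (C (qs i) ∩ B).card := hsum_eq
      _ = ∑ m ∈ S.image qs, (C m ∩ B).card := by rw [Finset.sum_image hqs_inj]
      _ ≤ ∑ m ∈ Finset.range k, (C m ∩ B).card := by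
          refine Finset.sum_le_sum_of_subset ?_
          intro m hm
          obtain ⟨i, hi, rfl⟩ := Finset.mem_image.mp hm
          obtain ⟨hmc, hpc⟩ := Finset.mem_filter.mp hi
          obtain ⟨_, hlt⟩ := hS i (Finset.mem_compl.mp hmc) hpc
          exact Finset.mem_range.mpr (by have := i.isLt; omega)
      _ ≤ B.card := hBsum
  have hpart2 : ∑ j ∈ (Tᶜ : Finset (Fin k)), (X j \ C (π j : ℕ)).card ≤ B.card + B.card := by
    have hstep1 : ∀ j ∈ (Tᶜ : Finset (Fin k)),
        (X j \ C (π j : ℕ)).card ≤ (C (π j : ℕ) ∩ B).card + w (π j) := by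
      intro j hj
      have hjT : j ∉ T := Finset.mem_compl.mp hj
      have hd : X j \ C (π j : ℕ) = X j := by
        refine Finset.sdiff_eq_self_iff_disjoint.mpr ?_
        have hce : C ((π j : Fin k) : ℕ) ∩ X j = ∅ := by
          by_contra hcon
          exact hjT ((hT_mem j).mpr
            ⟨((π j : Fin k) : ℕ), (π j).isLt, Finset.nonempty_iff_ne_empty.mpr hcon⟩)
        exact (Finset.disjoint_iff_inter_eq_empty.mpr hce).symm
      rw [hd]
      exact hBB (π j) (Finset.mem_compl.mp (hπC j hjT)) j hjT
    calc ∑ j ∈ (Tᶜ : Finset (Fin k)), (X j \ C (π j : ℕ)).card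
        ≤ ∑ j ∈ (Tᶜ : Finset (Fin k)), ((C (π j : ℕ) ∩ B).card + w (π j)) :=
          Finset.sum_le_sum hstep1
      _ = ∑ i ∈ (Tᶜ : Finset (Fin k)).image π, ((C (i : ℕ) ∩ B).card + w i) := by
          rw [Finset.sum_image (fun a _ b _ h => hπinj h)]
      _ ≤ ∑ i ∈ (Timgᶜ : Finset (Fin k)), ((C (i : ℕ) ∩ B).card + w i) := by
          refine Finset.sum_le_sum_of_subset ?_
          intro i hi
          obtain ⟨j, hj, rfl⟩ := Finset.mem_image.mp hi
          exact hπC j (Finset.mem_compl.mp hj)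
      _ = ∑ i ∈ (Timgᶜ : Finset (Fin k)), (C (i : ℕ) ∩ B).card
            + ∑ i ∈ (Timgᶜ : Finset (Fin k)), w i := Finset.sum_add_distrib
      _ ≤ B.card + B.card := add_le_add hB1 hB2
  omega
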